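/- Let X and Y be Gamma-distributed random variables with shape parameters a, b > 0 and rate parameters α, β > 0 respectively. If E X = E Y (i.e. a/α = b/β) and Var X ≤ Var Y (i.e. a/α² ≤ b/β²), then X ≤_cx Y, i.e. E f(X) ≤ E f(Y) for every convex function f : ℝ → ℝ for which both expectations exist. -/

import Mathlib

open MeasureTheory ProbabilityTheory Real Set Filter Topology

-- integral against gamma measure
lemma gamma_int {a r : ℝ} (ha : 0 < a) (hr : 0 < r) (g : ℝ → ℝ) :
    ∫ x, g x ∂(gammaMeasure a r) = ∫ x, gammaPDFReal a r x * g x := by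
  have hm : Measurable (fun x => (gammaPDFReal a r x).toNNReal) :=
    (measurable_gammaPDFReal a r).real_toNNReal
  have : gammaMeasure a r = volume.withDensity (fun x => ((gammaPDFReal a r x).toNNReal : ENNReal)) := by
    rfl
  rw [this, integral_withDensity_eq_integral_smul hm g]
  congr 1; ext x
  simp [NNReal.smul_def, Real.coe_toNNReal _ (gammaPDFReal_nonneg ha hr x)]

lemma gamma_integrable_iff {a r : ℝ} (ha : 0 < a) (hr : 0 < r) (g : ℝ → ℝ) :
    Integrable g (gammaMeasure a r) ↔ Integrable (fun x => g x * gammaPDFReal a r x) := by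
  have := integrable_withDensity_iff (f := gammaPDF a r)
    (μ := (volume : Measure ℝ)) (g := g)
    (measurable_gammaPDFReal a r).ennreal_ofReal
    (Filter.Eventually.of_forall fun x => ENNReal.ofReal_lt_top)
  rw [gammaMeasure] at *
  convert this using 2
  ext x
  rw [gammaPDF, ENNReal.toReal_ofReal (gammaPDFReal_nonneg ha hr x)]

lemma gamma_support {a r x : ℝ} (hx : x < 0) : gammaPDFReal a r x = 0 := by
  simp [gammaPDFReal, not_le.mpr hx]

lemma gamma_moment_integral {a r : ℝ} (ha : 0 < a) (hr : 0 < r) (k : ℝ) (hk : 0 < a + k) :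
    ∫ x, gammaPDFReal a r x * x ^ k = r ^ a / Gamma a * ((1/r) ^ (a+k) * Gamma (a+k)) := by
  have h0 : ∀ x ∉ Ici (0:ℝ), gammaPDFReal a r x * x ^ k = 0 := by
    intro x hx
    rw [gamma_support (not_le.mp (fun h => hx h))]
    ring
  rw [← setIntegral_eq_integral_of_forall_compl_eq_zero h0, integral_Ici_eq_integral_Ioi]
  have : ∀ x ∈ Ioi (0:ℝ), gammaPDFReal a r x * x ^ k
      = r ^ a / Gamma a * (x ^ (a + k - 1) * exp (-(r * x))) := by
    intro x (hx : 0 < x)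
    rw [gammaPDFReal, if_pos hx.le]
    rw [show a + k - 1 = (a-1) + k by ring, rpow_add hx]
    ring
  rw [setIntegral_congr_fun measurableSet_Ioi this, integral_const_mul,
    integral_rpow_mul_exp_neg_mul_Ioi hk hr]

lemma gamma_moment_integrable {a r : ℝ} (ha : 0 < a) (hr : 0 < r) (k : ℝ) (hk : 0 < a + k) :
    Integrable (fun x => gammaPDFReal a r x * x ^ k) := by
  rw [← integrableOn_univ, show (univ : Set ℝ) = Iio 0 ∪ Ici 0 by simp [Iio_union_Ici]]
  apply IntegrableOn.union
  · apply (integrableOn_congr_fun (g := fun _ => 0) ?_ measurableSet_Iio).mpr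
    · exact integrableOn_zero
    · intro x (hx : x < 0); simp [gamma_support hx]
  · rw [IntegrableOn, ← restrict_Ioi_eq_restrict_Ici]
    have : ∀ x ∈ Ioi (0:ℝ), gammaPDFReal a r x * x ^ k
        = r ^ a / Gamma a * (x ^ (a + k - 1) * exp (-r * x ^ (1:ℝ))) := by
      intro x (hx : 0 < x)
      rw [gammaPDFReal, if_pos hx.le, rpow_one,
        show a + k - 1 = (a-1) + k by ring, rpow_add hx, neg_mul]
      ring
    apply (integrableOn_congr_fun this measurableSet_Ioi).mpr
    exact (integrableOn_rpow_mul_exp_neg_mul_rpow (by linarith) zero_lt_one hr).const_mul _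

lemma gamma_mass {a r : ℝ} (ha : 0 < a) (hr : 0 < r) :
    ∫ x, gammaPDFReal a r x = 1 := by
  have := gamma_moment_integral ha hr 0 (by linarith)
  simp only [rpow_zero, mul_one, add_zero] at this
  rw [this, one_div, inv_rpow hr.le]
  field_simp [(Real.Gamma_pos_of_pos ha).ne', (rpow_pos_of_pos hr a).ne']

lemma gamma_mass_integrable {a r : ℝ} (ha : 0 < a) (hr : 0 < r) :
    Integrable (fun x => gammaPDFReal a r x) := by
  have := gamma_moment_integrable ha hr 0 (by linarith)
  simpa using this

lemma gamma_mean {a r : ℝ} (ha : 0 < a) (hr : 0 < r) :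
    ∫ x, gammaPDFReal a r x * x = a / r := by
  have := gamma_moment_integral ha hr 1 (by linarith)
  simp only [rpow_one] at this
  rw [this, Real.Gamma_add_one ha.ne', rpow_add (by positivity), rpow_one, one_div, inv_rpow hr.le]
  field_simp [(Real.Gamma_pos_of_pos ha).ne', (rpow_pos_of_pos hr a).ne']

lemma gamma_mean_integrable {a r : ℝ} (ha : 0 < a) (hr : 0 < r) :
    Integrable (fun x => gammaPDFReal a r x * x) := by
  have := gamma_moment_integrable ha hr 1 (by linarith)
  simpa using this

noncomputable def gammaLogRatio (a b α β x : ℝ) : ℝ :=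
  Real.log ((β ^ b * Gamma a) / (α ^ a * Gamma b)) + (b - a) * Real.log x + (α - β) * x

lemma gamma_ratio {a b α β : ℝ} (ha : 0 < a) (hb : 0 < b) (hα : 0 < α) (hβ : 0 < β)
    {x : ℝ} (hx : 0 < x) :
    gammaPDFReal b β x = gammaPDFReal a α x * Real.exp (gammaLogRatio a b α β x) := by
  have hΓa := Real.Gamma_pos_of_pos ha
  have hΓb := Real.Gamma_pos_of_pos hb
  have hαa : (0:ℝ) < α ^ a := rpow_pos_of_pos hα a
  have hβb : (0:ℝ) < β ^ b := rpow_pos_of_pos hβ b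
  rw [gammaLogRatio, exp_add, exp_add, exp_log (by positivity),
    show (b - a) * Real.log x = Real.log x * (b - a) by ring,
    ← rpow_def_of_pos hx]
  rw [gammaPDFReal, gammaPDFReal, if_pos hx.le, if_pos hx.le]
  rw [show α ^ a / Gamma a * x ^ (a - 1) * exp (-(α * x)) *
      (β ^ b * Gamma a / (α ^ a * Gamma b) * x ^ (b - a) * exp ((α - β) * x))
      = (β ^ b / Gamma b) * (x ^ (a-1) * x ^ (b-a)) * (exp (-(α*x)) * exp ((α-β)*x))
        * (α ^ a / α ^ a) * (Gamma a / Gamma a) by ring,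
    div_self hαa.ne', div_self hΓa.ne', ← rpow_add hx, ← exp_add,
    show a - 1 + (b - a) = b - 1 by ring, show -(α*x) + (α-β)*x = -(β*x) by ring]
  ring
lemma gammaLogRatio_convexOn {a b α β : ℝ} (hba : b < a) (hβα : β < α) :
    ConvexOn ℝ (Ioi 0) (gammaLogRatio a b α β) := by
  have h1 : ConvexOn ℝ (Ioi (0:ℝ)) (fun x => (b - a) * Real.log x) := by
    have hlog : ConcaveOn ℝ (Ioi (0:ℝ)) Real.log := strictConcaveOn_log_Ioi.concaveOn
    have := (hlog.smul (c := a - b) (by linarith)).neg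
    have heq : (fun x => (b - a) * Real.log x) = -fun x => (a - b) • Real.log x := by
      ext x; simp [smul_eq_mul]; ring
    rw [heq]; exact this
  have h2 : ConvexOn ℝ (Ioi (0:ℝ))
      (fun x => Real.log ((β ^ b * Gamma a) / (α ^ a * Gamma b)) + (α - β) * x) := by
    refine (convexOn_const _ (convex_Ioi 0)).add ?_
    have := (convexOn_id (convex_Ioi (0:ℝ))).smul (c := α - β) (by linarith)
    exact this
  have := h2.add h1
  have heq : gammaLogRatio a b α β = (fun x => Real.log ((β ^ b * Gamma a) / (α ^ a * Gamma b)) + (α - β) * x) + (fun x => (b - a) * Real.log x) := by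
    ext x; simp only [gammaLogRatio, Pi.add_apply]; ring
  rw [heq]; exact this

lemma gammaLogRatio_continuousOn {a b α β : ℝ} :
    ContinuousOn (gammaLogRatio a b α β) (Ioi 0) := by
  apply ContinuousOn.add
  apply ContinuousOn.add continuousOn_const
  · exact (Real.continuousOn_log.mono (fun x hx => ne_of_gt hx)).const_smul (b - a)
  · exact (continuousOn_id.const_smul (α - β))

lemma gammaLogRatio_tendsto_zero {a b α β : ℝ} (hba : b < a) :
    Tendsto (gammaLogRatio a b α β) (𝓝[>] 0) atTop := by
  have h1 : Tendsto (fun x => (b - a) * Real.log x) (𝓝[>] (0:ℝ)) atTop :=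
    Tendsto.const_mul_atBot_of_neg (by linarith) Real.tendsto_log_nhdsGT_zero
  have h2 : Tendsto (fun x : ℝ => Real.log ((β ^ b * Gamma a) / (α ^ a * Gamma b)) + (α - β) * x)
      (𝓝[>] (0:ℝ)) (𝓝 (Real.log ((β ^ b * Gamma a) / (α ^ a * Gamma b)) + (α - β) * 0)) := by
    apply Tendsto.mono_left _ nhdsWithin_le_nhds
    exact (tendsto_const_nhds.add ((continuous_const.mul continuous_id).tendsto 0))
  set C := Real.log ((β ^ b * Gamma a) / (α ^ a * Gamma b)) + (α - β) * 0 with hC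
  have hev : ∀ᶠ x in 𝓝[>] (0:ℝ),
      C - 1 ≤ Real.log ((β ^ b * Gamma a) / (α ^ a * Gamma b)) + (α - β) * x := by
    filter_upwards [h2.eventually (eventually_gt_nhds (by linarith : C - 1 < C))] with x hx
    exact hx.le
  have h3 := tendsto_atTop_add_left_of_le' (l := 𝓝[>] (0:ℝ)) (C - 1)
    (f := fun x : ℝ => Real.log ((β ^ b * Gamma a) / (α ^ a * Gamma b)) + (α - β) * x)
    hev h1
  apply h3.congr
  intro x; simp only [gammaLogRatio]; ring

lemma gammaLogRatio_tendsto_atTop {a b α β : ℝ} (hba : b < a) (hβα : β < α) :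
    Tendsto (gammaLogRatio a b α β) atTop atTop := by
  have hlog : Tendsto (fun x : ℝ => Real.log x / x) atTop (𝓝 0) := by
    have := Real.isLittleO_log_id_atTop
    rwa [Asymptotics.isLittleO_iff_tendsto (fun x hx => by simp only [id] at hx; simp [hx])] at this
  have hcoef : Tendsto (fun x : ℝ => (α - β) + (b - a) * (Real.log x / x)) atTop (𝓝 ((α - β) + (b-a) * 0)) :=
    tendsto_const_nhds.add (hlog.const_mul _)
  rw [mul_zero, add_zero] at hcoef
  have hmain : Tendsto (fun x : ℝ => ((α - β) + (b - a) * (Real.log x / x)) * x) atTop atTop :=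
    hcoef.pos_mul_atTop (by linarith) tendsto_id
  have : Tendsto (fun x : ℝ => (b - a) * Real.log x + (α - β) * x) atTop atTop := by
    apply hmain.congr'
    filter_upwards [eventually_gt_atTop (0:ℝ)] with x hx
    field_simp
    ring
  apply (tendsto_atTop_add_const_left _ (Real.log ((β ^ b * Gamma a) / (α ^ a * Gamma b))) this).congr
  intro x; simp only [gammaLogRatio]; ring

section Main

variable {a b α β : ℝ}

lemma gammaLogRatio_neg (ha : 0 < a) (hb : 0 < b) (hα : 0 < α) (hβ : 0 < β)
    (hba : b < a) (hβα : β < α) :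
    ∃ x0 : ℝ, 0 < x0 ∧ gammaLogRatio a b α β x0 < 0 := by
  by_contra hcon
  push_neg at hcon
  have hqp : ∀ᵐ x : ℝ, 0 ≤ gammaPDFReal b β x - gammaPDFReal a α x := by
    filter_upwards [compl_mem_ae_iff.mpr (volume_singleton (a := (0:ℝ)))] with x hx
    have hx0 : x ≠ 0 := hx
    rcases hx0.lt_or_gt with h | h
    · simp [gamma_support h]
    · rw [gamma_ratio ha hb hα hβ h]
      have h1 : (1:ℝ) ≤ Real.exp (gammaLogRatio a b α β x) := by
        rw [← Real.exp_zero]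
        exact Real.exp_le_exp.mpr (hcon x h)
      nlinarith [gammaPDFReal_pos ha hα h]
  have hint : Integrable (fun x => gammaPDFReal b β x - gammaPDFReal a α x) :=
    (gamma_mass_integrable hb hβ).sub (gamma_mass_integrable ha hα)
  have hzero : ∫ x, (gammaPDFReal b β x - gammaPDFReal a α x) = 0 := by
    rw [integral_sub (gamma_mass_integrable hb hβ) (gamma_mass_integrable ha hα),
      gamma_mass ha hα, gamma_mass hb hβ]
    ring
  have hae : (fun x => gammaPDFReal b β x - gammaPDFReal a α x) =ᵐ[volume] 0 :=
    (integral_eq_zero_iff_of_nonneg_ae hqp hint).mp hzero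
  obtain ⟨x₀, hx₀pos, hφx₀⟩ : ∃ x : ℝ, 0 < x ∧ 0 < gammaLogRatio a b α β x := by
    have h1 := (gammaLogRatio_tendsto_zero hba (α := α) (β := β)).eventually
      (eventually_gt_atTop 0)
    have h2 : ∀ᶠ x : ℝ in 𝓝[>] 0, 0 < x := self_mem_nhdsWithin
    obtain ⟨x, h1, h2⟩ := (h2.and h1).exists
    exact ⟨x, h1, h2⟩
  have hcont : ContinuousAt (gammaLogRatio a b α β) x₀ :=
    gammaLogRatio_continuousOn.continuousAt (Ioi_mem_nhds hx₀pos)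
  have hev : ∀ᶠ x in 𝓝 x₀, 0 < gammaLogRatio a b α β x ∧ 0 < x :=
    (hcont.eventually (eventually_gt_nhds hφx₀)).and (eventually_gt_nhds hx₀pos)
  obtain ⟨ε, hε, hball⟩ := Metric.eventually_nhds_iff_ball.mp hev
  have hsub : Metric.ball x₀ ε ⊆ {x : ℝ | ¬ (gammaPDFReal b β x - gammaPDFReal a α x = 0)} := by
    intro x hx
    obtain ⟨h1, h2⟩ := hball x hx
    have := gammaPDFReal_pos ha hα h2
    rw [Set.mem_setOf_eq, gamma_ratio ha hb hα hβ h2]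
    have hexp : (1:ℝ) < Real.exp (gammaLogRatio a b α β x) := by
      rw [← Real.exp_zero]
      exact Real.exp_lt_exp.mpr h1
    nlinarith
  have hnull : volume {x : ℝ | ¬ (gammaPDFReal b β x - gammaPDFReal a α x = 0)} = 0 := by
    have := hae
    rw [Filter.EventuallyEq, ae_iff] at this
    simpa using this
  have := measure_mono_null hsub hnull
  rw [Real.volume_ball] at this
  simp only [ENNReal.ofReal_eq_zero] at this
  linarith

end Main

lemma gammaLogRatio_crossings (ha : 0 < a) (hb : 0 < b) (hα : 0 < α) (hβ : 0 < β)
    (hba : b < a) (hβα : β < α) :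
    ∃ x₁ x₂ : ℝ, 0 < x₁ ∧ x₁ < x₂ ∧
      (∀ x, x₁ ≤ x → x ≤ x₂ → gammaLogRatio a b α β x ≤ 0) ∧
      (∀ x, 0 < x → (x ≤ x₁ ∨ x₂ ≤ x) → 0 ≤ gammaLogRatio a b α β x) := by
  obtain ⟨x₀, hx₀pos, hφx₀⟩ := gammaLogRatio_neg ha hb hα hβ hba hβα
  set φ := gammaLogRatio a b α β with hφdef
  -- a point u ∈ (0, x₀) with φ u > 0
  obtain ⟨u, hu_mem, hφu⟩ : ∃ u : ℝ, u ∈ Ioo 0 x₀ ∧ 0 < φ u := by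
    have h1 := (gammaLogRatio_tendsto_zero hba (α := α) (β := β)).eventually
      (eventually_gt_atTop 0)
    have h2 : Ioo (0:ℝ) x₀ ∈ 𝓝[>] (0:ℝ) := Ioo_mem_nhdsGT_of_mem ⟨le_refl _, hx₀pos⟩
    obtain ⟨x, h2, h1⟩ := ((Filter.eventually_iff_exists_mem.mpr ⟨_, h2, fun y hy => hy⟩).and h1).exists
    exact ⟨x, h2, h1⟩
  -- a point v > x₀ with φ v > 0
  obtain ⟨v, hv_mem, hφv⟩ : ∃ v : ℝ, x₀ < v ∧ 0 < φ v := by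
    have h1 := (gammaLogRatio_tendsto_atTop hba hβα (α := α) (β := β)).eventually
      (eventually_gt_atTop 0)
    obtain ⟨x, h2, h1⟩ := ((eventually_gt_atTop x₀).and h1).exists
    exact ⟨x, h2, h1⟩
  have hcont : ContinuousOn φ (Ioi 0) := gammaLogRatio_continuousOn
  -- first crossing x₁ ∈ [u, x₀)
  obtain ⟨x₁, hx₁mem, hx₁⟩ : ∃ x₁ ∈ Icc u x₀, φ x₁ = 0 := by
    have hsub : Icc u x₀ ⊆ Ioi 0 := fun x hx => lt_of_lt_of_le hu_mem.1 hx.1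
    have := intermediate_value_Icc' (le_of_lt hu_mem.2) (hcont.mono hsub)
    have h0 : (0:ℝ) ∈ Icc (φ x₀) (φ u) := ⟨hφx₀.le, hφu.le⟩
    obtain ⟨x₁, hmem, hval⟩ := this h0
    exact ⟨x₁, hmem, hval⟩
  obtain ⟨x₂, hx₂mem, hx₂⟩ : ∃ x₂ ∈ Icc x₀ v, φ x₂ = 0 := by
    have hsub : Icc x₀ v ⊆ Ioi 0 := fun x hx => lt_of_lt_of_le hx₀pos hx.1
    have := intermediate_value_Icc (le_of_lt hv_mem) (hcont.mono hsub)
    have h0 : (0:ℝ) ∈ Icc (φ x₀) (φ v) := ⟨hφx₀.le, hφv.le⟩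
    obtain ⟨x₂, hmem, hval⟩ := this h0
    exact ⟨x₂, hmem, hval⟩
  have hx₁pos : 0 < x₁ := lt_of_lt_of_le hu_mem.1 hx₁mem.1
  have hx₁lt : x₁ < x₀ := lt_of_le_of_ne hx₁mem.2 (fun h => by rw [h] at hx₁; linarith)
  have hx₂gt : x₀ < x₂ := lt_of_le_of_ne hx₂mem.1 (fun h => by rw [← h] at hx₂; linarith)
  have hx₁₂ : x₁ < x₂ := hx₁lt.trans hx₂gt
  have hx₂pos : 0 < x₂ := hx₁pos.trans hx₁₂
  have hconv : ConvexOn ℝ (Ioi 0) φ := gammaLogRatio_convexOn hba hβα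
  refine ⟨x₁, x₂, hx₁pos, hx₁₂, ?_, ?_⟩
  · intro x h1 h2
    have hseg : x ∈ segment ℝ x₁ x₂ := by
      rw [segment_eq_Icc hx₁₂.le]; exact ⟨h1, h2⟩
    have := hconv.le_on_segment (mem_Ioi.mpr hx₁pos) (mem_Ioi.mpr hx₂pos) hseg
    rw [hx₁, hx₂] at this
    simpa using this
  · intro x hxpos hx
    rcases hx with hx | hx
    · rcases eq_or_lt_of_le hx with h | h
      · rw [h, hx₁]
      · have := hconv.slope_mono_adjacent (mem_Ioi.mpr hxpos) (mem_Ioi.mpr hx₂pos) h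
          hx₁₂
        rw [hx₁, hx₂] at this
        rw [div_le_div_iff₀ (by linarith) (by linarith)] at this
        nlinarith
    · rcases eq_or_lt_of_le hx with h | h
      · rw [← h, hx₂]
      · have := hconv.slope_mono_adjacent (mem_Ioi.mpr hx₁pos) (mem_Ioi.mpr hxpos) hx₁₂
          h
        rw [hx₁, hx₂] at this
        rw [div_le_div_iff₀ (by linarith) (by linarith)] at this
        nlinarith

lemma gamma_cx_density (ha : 0 < a) (hb : 0 < b) (hα : 0 < α) (hβ : 0 < β)
    (hba : b < a) (hβα : β < α) (hmean : a / α = b / β)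
    (f : ℝ → ℝ) (hf : ConvexOn ℝ Set.univ f)
    (hfp : Integrable (fun x => f x * gammaPDFReal a α x))
    (hfq : Integrable (fun x => f x * gammaPDFReal b β x)) :
    ∫ x, f x * gammaPDFReal a α x ≤ ∫ x, f x * gammaPDFReal b β x := by
  obtain ⟨x₁, x₂, hx₁pos, hx₁₂, hφneg, hφpos⟩ :=
    gammaLogRatio_crossings ha hb hα hβ hba hβα
  have hx₂pos : 0 < x₂ := hx₁pos.trans hx₁₂
  have hd : (0:ℝ) < x₂ - x₁ := by linarith
  set s := (f x₂ - f x₁) / (x₂ - x₁) with hs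
  set L := fun x : ℝ => f x₁ + s * (x - x₁) with hL
  -- secant above f inside [x₁, x₂]
  have hsec_in : ∀ x, x₁ ≤ x → x ≤ x₂ → f x ≤ L x := by
    intro x h1 h2
    have ht : (0:ℝ) ≤ (x₂ - x) / (x₂ - x₁) := div_nonneg (by linarith) hd.le
    have hu : (0:ℝ) ≤ (x - x₁) / (x₂ - x₁) := div_nonneg (by linarith) hd.le
    have htu : (x₂ - x) / (x₂ - x₁) + (x - x₁) / (x₂ - x₁) = 1 := by
      field_simp
      ring
    have hxeq : ((x₂ - x) / (x₂ - x₁)) • x₁ + ((x - x₁) / (x₂ - x₁)) • x₂ = x := by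
      simp only [smul_eq_mul]; field_simp; ring
    have := hf.2 (Set.mem_univ x₁) (Set.mem_univ x₂) ht hu htu
    rw [hxeq] at this
    refine this.trans (le_of_eq ?_)
    simp only [smul_eq_mul, hL, hs]
    field_simp
    ring
  -- secant below f outside (x₁, x₂)
  have hsec_out : ∀ x, (x ≤ x₁ ∨ x₂ ≤ x) → L x ≤ f x := by
    intro x hx
    rcases hx with hx | hx
    · rcases eq_or_lt_of_le hx with h | h
      · rw [h]; simp [hL]
      · have := hf.slope_mono_adjacent (Set.mem_univ x) (Set.mem_univ x₂) h hx₁₂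
        rw [div_le_div_iff₀ (by linarith) (by linarith)] at this
        have hgoal : s * (x - x₁) ≤ f x - f x₁ := by
          rw [hs, div_mul_eq_mul_div, div_le_iff₀ hd]
          nlinarith
        simp only [hL]; linarith
    · rcases eq_or_lt_of_le hx with h | h
      · rw [← h]; simp only [hL, hs]; rw [div_mul_cancel₀]; · linarith
        · linarith
      · have := hf.slope_mono_adjacent (Set.mem_univ x₁) (Set.mem_univ x) hx₁₂ h
        rw [div_le_div_iff₀ (by linarith) (by linarith)] at this
        have hgoal : s * (x - x₁) ≤ f x - f x₁ := by
          rw [hs, div_mul_eq_mul_div, div_le_iff₀ hd]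
          nlinarith
        simp only [hL]; linarith
  -- pointwise inequality
  have hpt : ∀ᵐ x : ℝ, 0 ≤ (f x - L x) * (gammaPDFReal b β x - gammaPDFReal a α x) := by
    filter_upwards [compl_mem_ae_iff.mpr (volume_singleton (a := (0:ℝ)))] with x hx
    have hx0 : x ≠ 0 := hx
    rcases hx0.lt_or_gt with h | h
    · simp [gamma_support h]
    · by_cases hin : x₁ ≤ x ∧ x ≤ x₂
      · have hφ : gammaLogRatio a b α β x ≤ 0 := hφneg x hin.1 hin.2
        have hqp : gammaPDFReal b β x - gammaPDFReal a α x ≤ 0 := by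
          rw [gamma_ratio ha hb hα hβ h]
          have he : Real.exp (gammaLogRatio a b α β x) ≤ 1 := by
            rw [← Real.exp_zero]; exact Real.exp_le_exp.mpr hφ
          nlinarith [gammaPDFReal_nonneg ha hα x]
        have hfL : f x - L x ≤ 0 := by
          have := hsec_in x hin.1 hin.2; linarith
        nlinarith [hfL, hqp]
      · have hout : x ≤ x₁ ∨ x₂ ≤ x := by
          rcases not_and_or.mp hin with h' | h' <;> [left; right] <;> push_neg at h' <;> linarith
        have hφ : 0 ≤ gammaLogRatio a b α β x := hφpos x h hout
        have hqp : 0 ≤ gammaPDFReal b β x - gammaPDFReal a α x := by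
          rw [gamma_ratio ha hb hα hβ h]
          have he : 1 ≤ Real.exp (gammaLogRatio a b α β x) := by
            rw [← Real.exp_zero]; exact Real.exp_le_exp.mpr hφ
          nlinarith [gammaPDFReal_nonneg ha hα x]
        have hfL : 0 ≤ f x - L x := by
          have := hsec_out x hout; linarith
        exact mul_nonneg hfL hqp
  -- integrability of the secant against each density
  have hLp : Integrable (fun x => L x * gammaPDFReal a α x) := by
    apply (((gamma_mass_integrable ha hα).const_mul (f x₁ - s * x₁)).add
      ((gamma_mean_integrable ha hα).const_mul s)).congr
    filter_upwards with x
    simp only [hL, Pi.add_apply]; ring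
  have hLq : Integrable (fun x => L x * gammaPDFReal b β x) := by
    apply (((gamma_mass_integrable hb hβ).const_mul (f x₁ - s * x₁)).add
      ((gamma_mean_integrable hb hβ).const_mul s)).congr
    filter_upwards with x
    simp only [hL, Pi.add_apply]; ring
  -- integral of the secant is the same under both densities
  have hIL : ∀ (c r : ℝ), 0 < c → 0 < r →
      ∫ x, L x * gammaPDFReal c r x = (f x₁ - s * x₁) + s * (c / r) := by
    intro c r hc hr
    have : (fun x => L x * gammaPDFReal c r x) =
        fun x => (f x₁ - s * x₁) * gammaPDFReal c r x + s * (gammaPDFReal c r x * x) := by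
      funext x; simp only [hL]; ring
    rw [this, integral_add ((gamma_mass_integrable hc hr).const_mul _)
      ((gamma_mean_integrable hc hr).const_mul _), integral_const_mul, integral_const_mul,
      gamma_mass hc hr, gamma_mean hc hr, mul_one]
  -- expansion of the key integral
  have hnonneg : 0 ≤ ∫ x, (f x - L x) * (gammaPDFReal b β x - gammaPDFReal a α x) :=
    integral_nonneg_of_ae hpt
  have hexp : ∫ x, (f x - L x) * (gammaPDFReal b β x - gammaPDFReal a α x)
      = ((∫ x, f x * gammaPDFReal b β x) - ∫ x, f x * gammaPDFReal a α x)
        - ((∫ x, L x * gammaPDFReal b β x) - ∫ x, L x * gammaPDFReal a α x) := by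
    rw [show (fun x => (f x - L x) * (gammaPDFReal b β x - gammaPDFReal a α x))
        = fun x => (f x * gammaPDFReal b β x - f x * gammaPDFReal a α x)
          - (L x * gammaPDFReal b β x - L x * gammaPDFReal a α x) from
      funext fun x => by ring]
    have e1 : Integrable (fun x => f x * gammaPDFReal b β x - f x * gammaPDFReal a α x) :=
      hfq.sub hfp
    have e2 : Integrable (fun x => L x * gammaPDFReal b β x - L x * gammaPDFReal a α x) :=
      hLq.sub hLp
    rw [integral_sub e1 e2, integral_sub hfq hfp, integral_sub hLq hLp]
  have hLeq : ∫ x, L x * gammaPDFReal b β x = ∫ x, L x * gammaPDFReal a α x := by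
    rw [hIL a α ha hα, hIL b β hb hβ, hmean]
  rw [hexp, hLeq] at hnonneg
  linarith

/-- Convex order within the Gamma family: if `X ~ Gamma(a, α)` and
`Y ~ Gamma(b, β)` have equal means (`a/α = b/β`) and ordered variances
(`a/α² ≤ b/β²`), then `E f(X) ≤ E f(Y)` for every convex `f : ℝ → ℝ` for
which both expectations exist. -/
theorem stmt_5 {Ω : Type*} [MeasureSpace Ω] (μ : Measure Ω) [IsProbabilityMeasure μ]
    (a b α β : ℝ) (ha : 0 < a) (hb : 0 < b) (hα : 0 < α) (hβ : 0 < β)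
    (X Y : Ω → ℝ) (hXm : Measurable X) (hYm : Measurable Y)
    (hX : Measure.map X μ = gammaMeasure a α)
    (hY : Measure.map Y μ = gammaMeasure b β)
    (hmean : a / α = b / β) (hvar : a / α ^ 2 ≤ b / β ^ 2)
    (f : ℝ → ℝ) (hf : ConvexOn ℝ Set.univ f)
    (hfX : Integrable (fun ω => f (X ω)) μ)
    (hfY : Integrable (fun ω => f (Y ω)) μ) :
    ∫ ω, f (X ω) ∂μ ≤ ∫ ω, f (Y ω) ∂μ := by
  have hfc : Continuous f := by
    rw [← continuousOn_univ]
    exact hf.continuousOn isOpen_univ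
  have hXint : Integrable f (gammaMeasure a α) := by
    rw [← hX]
    exact (integrable_map_measure hfc.aestronglyMeasurable hXm.aemeasurable).mpr hfX
  have hYint : Integrable f (gammaMeasure b β) := by
    rw [← hY]
    exact (integrable_map_measure hfc.aestronglyMeasurable hYm.aemeasurable).mpr hfY
  have hfp : Integrable (fun x => f x * gammaPDFReal a α x) :=
    (gamma_integrable_iff ha hα f).mp hXint
  have hfq : Integrable (fun x => f x * gammaPDFReal b β x) :=
    (gamma_integrable_iff hb hβ f).mp hYint
  have hIX : ∫ ω, f (X ω) ∂μ = ∫ x, f x * gammaPDFReal a α x := by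
    rw [← integral_map hXm.aemeasurable hfc.aestronglyMeasurable, hX, gamma_int ha hα f]
    exact integral_congr_ae (Filter.Eventually.of_forall fun x => mul_comm _ _)
  have hIY : ∫ ω, f (Y ω) ∂μ = ∫ x, f x * gammaPDFReal b β x := by
    rw [← integral_map hYm.aemeasurable hfc.aestronglyMeasurable, hY, gamma_int hb hβ f]
    exact integral_congr_ae (Filter.Eventually.of_forall fun x => mul_comm _ _)
  rw [hIX, hIY]
  by_cases hab : a = b
  · have hαβ : α = β := by
      rw [hab] at hmean
      have := (div_eq_div_iff hα.ne' hβ.ne').mp hmean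
      exact (mul_left_cancel₀ hb.ne' this).symm
    rw [hab, hαβ]
  · have hmean' : a * β = b * α := (div_eq_div_iff hα.ne' hβ.ne').mp hmean
    have hvar' : a * β ^ 2 ≤ b * α ^ 2 := (div_le_div_iff₀ (by positivity) (by positivity)).mp hvar
    have hβleα : β ≤ α := by nlinarith [mul_pos hb hα, mul_pos ha hβ]
    have hβα : β < α := by
      rcases eq_or_lt_of_le hβleα with h | h
      · exfalso; apply hab; rw [h] at hmean'
        exact mul_right_cancel₀ hα.ne' hmean'
      · exact h
    have hba : b < a := by nlinarith
    exact gamma_cx_density ha hb hα hβ hba hβα hmean f hf hfp hfq
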